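/- Discrete Oleinik comparison: let w^n_j satisfy max(0, w^{n+1}_j) ≤ ŵ^n_j − Δt(δ/8)(ŵ^n_j)² for j ∈ [J₁+1, J₂−1], where ŵ^n_j = max(0, w^n_{j−1}, w^n_j, w^n_{j+1}), and suppose 0 ≤ ŵ^n_j ≤ (Δt δ/4)^{−1} for all relevant j, n, and sup_{J₁ ≤ j ≤ J₂} w^0_j ≤ (Δt δ/4)^{−1}. Then for all n with 0 ≤ n ≤ (J₂−J₁)/2: (δ/8)·sup_{J₁+n ≤ j ≤ J₂−n} w^n_j ≤ 1/((n+1)Δt). -/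
import Mathlib


/-- Discrete Oleinik comparison estimate for the localized discrete gradient. -/
theorem discrete_oleinik_comparison
    (Δt δ : ℝ) (hΔt : 0 < Δt) (hδ : 0 < δ)
    (J₁ J₂ : ℤ) (hJ : J₁ < J₂)
    (w : ℕ → ℤ → ℝ) (hatw : ℕ → ℤ → ℝ)
    (hhatw : ∀ (n : ℕ) (j : ℤ),
      hatw n j = max 0 (max (w n (j - 1)) (max (w n j) (w n (j + 1)))))
    (hstep : ∀ (n : ℕ) (j : ℤ), J₁ + 1 ≤ j → j ≤ J₂ - 1 →
      max 0 (w (n + 1) j) ≤ hatw n j - Δt * (δ / 8) * (hatw n j) ^ 2)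
    (hbound : ∀ (n : ℕ) (j : ℤ), hatw n j ≤ (Δt * δ / 4)⁻¹)
    (hinit : ∀ j : ℤ, J₁ ≤ j → j ≤ J₂ → w 0 j ≤ (Δt * δ / 4)⁻¹) :
    ∀ n : ℕ, 2 * (n : ℤ) ≤ J₂ - J₁ →
      ∀ j : ℤ, J₁ + n ≤ j → j ≤ J₂ - n →
        (δ / 8) * w n j ≤ 1 / ((n + 1) * Δt) := by
  have hP : 0 < Δt * (δ / 8) := by positivity
  have key : ∀ n : ℕ, 2 * (n : ℤ) ≤ J₂ - J₁ →
      ∀ j : ℤ, J₁ + n ≤ j → j ≤ J₂ - n →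
        Δt * (δ / 8) * ((n : ℝ) + 1) * w n j ≤ 1 := by
    intro n
    induction n with
    | zero =>
      intro _ j hj1 hj2
      have h := hinit j (by simpa using hj1) (by simpa using hj2)
      have hval : Δt * (δ / 8) * (Δt * δ / 4)⁻¹ = 1 / 2 := by
        field_simp; ring
      have := mul_le_mul_of_nonneg_left h hP.le
      push_cast
      nlinarith
    | succ n ih =>
      intro hn j hj1 hj2
      push_cast at hj1 hj2 hn
      have hn' : 2 * (n : ℤ) ≤ J₂ - J₁ := by linarith
      have hQ : 0 < Δt * (δ / 8) * ((n : ℝ) + 1) := by positivity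
      have hwle : ∀ k : ℤ, J₁ + (n : ℤ) ≤ k → k ≤ J₂ - (n : ℤ) →
          w n k ≤ (Δt * (δ / 8) * ((n : ℝ) + 1))⁻¹ := by
        intro k h1 h2
        have h3 := ih hn' k h1 h2
        rw [← one_div, le_div_iff₀ hQ]
        nlinarith
      have hx0 : 0 ≤ hatw n j := by rw [hhatw]; exact le_max_left _ _
      have hxle : hatw n j ≤ (Δt * (δ / 8) * ((n : ℝ) + 1))⁻¹ := by
        rw [hhatw]
        refine max_le (by positivity) (max_le ?_ (max_le ?_ ?_)) <;>
          apply hwle <;> linarith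
      have hQx : Δt * (δ / 8) * ((n : ℝ) + 1) * hatw n j ≤ 1 := by
        have := mul_le_mul_of_nonneg_left hxle hQ.le
        rwa [mul_inv_cancel₀ (ne_of_gt hQ)] at this
      have h2Px : 2 * (Δt * (δ / 8)) * hatw n j ≤ 1 := by
        have hb := hbound n j
        have h2P : 0 < Δt * δ / 4 := by positivity
        have := mul_le_mul_of_nonneg_left hb h2P.le
        rw [mul_inv_cancel₀ (ne_of_gt h2P)] at this
        nlinarith
      have hst := hstep n j (by linarith) (by linarith)
      have hwmax : w (n + 1) j ≤ hatw n j - Δt * (δ / 8) * (hatw n j) ^ 2 :=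
        le_trans (le_max_right 0 _) hst
      push_cast
      have hA : 0 ≤ 1 - Δt * (δ / 8) * ((n : ℝ) + 1) * hatw n j := by linarith
      have hB : 0 ≤ 1 - 2 * (Δt * (δ / 8)) * hatw n j := by linarith
      have hPx0 : 0 ≤ Δt * (δ / 8) * hatw n j := by positivity
      nlinarith [mul_nonneg hA hB, mul_nonneg hPx0 hA, sq_nonneg (Δt * (δ / 8) * hatw n j),
        mul_le_mul_of_nonneg_left hwmax (show (0:ℝ) ≤ Δt * (δ / 8) * ((n : ℝ) + 2) by positivity)]
  intro n hn j hj1 hj2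
  have h := key n hn j hj1 hj2
  rw [le_div_iff₀ (show (0:ℝ) < ((n : ℝ) + 1) * Δt by positivity)]
  nlinarith
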